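/- Let B be a primitive nonnegative matrix indexed by a finite set, and suppose nonnegative vectors V_p satisfy V_{p+1} ≥ B V_p − N^{p+1} u for a fixed positive vector u and a constant N > 1. If limsup_p ‖V_p‖₁/N^p = +∞ along the natural filtration (as in Lemma 4.2 of the paper: specifically, limsup_p O_p(f,D)/N^p = +∞ where ‖V(f,n,p)‖₁ = O_{n+p}(f,D)), then for any vector 𝐯 there exists p₀ with V_{p₀} > N^{p₀} 𝐯 entrywise. -/
import Mathlib


def MatPrimitive {α : Type*} [Fintype α] [DecidableEq α] (A : Matrix α α ℝ) : Prop :=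
  ∃ k : ℕ, 0 < k ∧ ∀ i j, 0 < (A ^ k) i j

/-- Accumulated error vector: `wAux B u m = ∑_{ℓ<m} B^ℓ u` (recursively). -/
def wAux {α : Type*} [Fintype α] (B : Matrix α α ℝ) (u : α → ℝ) : ℕ → α → ℝ
  | 0 => 0
  | m + 1 => fun i => B.mulVec (wAux B u m) i + u i

lemma wAux_nonneg {α : Type*} [Fintype α] (B : Matrix α α ℝ) (hB : ∀ i j, 0 ≤ B i j)
    (u : α → ℝ) (hu : ∀ i, 0 ≤ u i) : ∀ m i, 0 ≤ wAux B u m i := by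
  intro m
  induction m with
  | zero => intro i; simp [wAux]
  | succ m ih =>
    intro i
    have h1 : 0 ≤ B.mulVec (wAux B u m) i :=
      Finset.sum_nonneg fun j _ => mul_nonneg (hB i j) (ih j)
    have := hu i
    simp only [wAux]
    linarith

lemma mulVec_mono {α : Type*} [Fintype α] (B : Matrix α α ℝ) (hB : ∀ i j, 0 ≤ B i j)
    (x y : α → ℝ) (hxy : ∀ j, x j ≤ y j) : ∀ i, B.mulVec x i ≤ B.mulVec y i := by
  intro i
  exact Finset.sum_le_sum fun j _ => mul_le_mul_of_nonneg_left (hxy j) (hB i j)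

lemma iter_rec {α : Type*} [Fintype α] [DecidableEq α] (B : Matrix α α ℝ)
    (hB : ∀ i j, 0 ≤ B i j) (u : α → ℝ) (hu : ∀ i, 0 ≤ u i) (N : ℝ) (hN : 1 ≤ N)
    (V : ℕ → α → ℝ)
    (hrec : ∀ p i, B.mulVec (V p) i - N ^ (p + 1) * u i ≤ V (p + 1) i) :
    ∀ m p i, (B ^ m).mulVec (V p) i - N ^ (p + m) * wAux B u m i ≤ V (p + m) i := by
  intro m
  induction m with
  | zero => intro p i; simp [wAux, Matrix.one_mulVec]
  | succ m ih =>
    intro p i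
    have hN0 : (0:ℝ) ≤ N := le_trans zero_le_one hN
    have h1 : B.mulVec (V (p + m)) i - N ^ (p + m + 1) * u i ≤ V (p + m + 1) i :=
      hrec (p + m) i
    have h2 : B.mulVec ((B ^ m).mulVec (V p) - N ^ (p + m) • wAux B u m) i
        ≤ B.mulVec (V (p + m)) i := by
      refine mulVec_mono B hB _ _ (fun j => ?_) i
      simpa using ih p j
    have h3 : B.mulVec ((B ^ m).mulVec (V p) - N ^ (p + m) • wAux B u m) i
        = B.mulVec ((B ^ m).mulVec (V p)) i - N ^ (p + m) * B.mulVec (wAux B u m) i := by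
      rw [Matrix.mulVec_sub, Matrix.mulVec_smul]
      simp
    have h4 : B.mulVec ((B ^ m).mulVec (V p)) i = (B ^ (m + 1)).mulVec (V p) i := by
      rw [pow_succ', Matrix.mulVec_mulVec]
    have h5 : 0 ≤ B.mulVec (wAux B u m) i :=
      Finset.sum_nonneg fun j _ => mul_nonneg (hB i j) (wAux_nonneg B hB u hu m j)
    have h6 : N ^ (p + m) * B.mulVec (wAux B u m) i
        ≤ N ^ (p + m + 1) * B.mulVec (wAux B u m) i :=
      mul_le_mul_of_nonneg_right (pow_le_pow_right₀ hN (Nat.le_succ _)) h5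
    have h7 : N ^ (p + m + 1) * wAux B u (m + 1) i
        = N ^ (p + m + 1) * B.mulVec (wAux B u m) i + N ^ (p + m + 1) * u i := by
      simp [wAux, mul_add]
    have hpm : p + (m + 1) = p + m + 1 := by ring
    rw [hpm, h7]
    linarith

/-- abstract form of Lemma 4.2: if B is primitive, the nonnegative vectors
V_p satisfy V_{p+1} ≥ B V_p − N^{p+1} u and ‖V_p‖₁/N^p is unbounded, then for any vector v
there is p₀ with V_{p₀} > N^{p₀} v entrywise. -/
theorem eventually_dominates {α : Type*} [Fintype α] [DecidableEq α]
    (B : Matrix α α ℝ) (hB : ∀ i j, 0 ≤ B i j) (hprim : MatPrimitive B)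
    (u : α → ℝ) (hu : ∀ i, 0 < u i) (N : ℝ) (hN : 1 < N)
    (V : ℕ → α → ℝ) (hVpos : ∀ p i, 0 ≤ V p i)
    (hrec : ∀ p i, B.mulVec (V p) i - N ^ (p + 1) * u i ≤ V (p + 1) i)
    (hunb : ∀ C : ℝ, ∃ᶠ p in Filter.atTop, C < (∑ i, |V p i|) / N ^ p) :
    ∀ v : α → ℝ, ∃ p0 : ℕ, ∀ i, N ^ p0 * v i < V p0 i := by
  intro v
  by_cases hne : Nonempty α
  swap
  · exact ⟨0, fun i => absurd ⟨i⟩ hne⟩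
  obtain ⟨k, hk0, hkpos⟩ := hprim
  have hN0 : (0:ℝ) < N := lt_trans zero_lt_one hN
  have hne' : (Finset.univ : Finset (α × α)).Nonempty := Finset.univ_nonempty
  set δ : ℝ := Finset.univ.inf' hne' (fun q : α × α => (B ^ k) q.1 q.2) with hδdef
  have hδpos : 0 < δ := by
    obtain ⟨q, _, hq⟩ := Finset.exists_mem_eq_inf' hne' (fun q : α × α => (B ^ k) q.1 q.2)
    rw [hδdef, hq]; exact hkpos q.1 q.2
  have hδle : ∀ i j, δ ≤ (B ^ k) i j := fun i j =>
    Finset.inf'_le _ (Finset.mem_univ (i, j))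
  have hneα : (Finset.univ : Finset α).Nonempty := Finset.univ_nonempty
  set M : ℝ := Finset.univ.sup' hneα (fun i => v i + wAux B u k i) with hMdef
  have hMle : ∀ i, v i + wAux B u k i ≤ M := fun i =>
    Finset.le_sup' (fun i => v i + wAux B u k i) (Finset.mem_univ i)
  set C : ℝ := N ^ k * M / δ + 1 with hCdef
  obtain ⟨p, hp⟩ := (hunb C).exists
  refine ⟨p + k, fun i => ?_⟩
  have hNp : (0:ℝ) < N ^ p := pow_pos hN0 p
  have hS : ∑ j, V p j = ∑ j, |V p j| :=
    Finset.sum_congr rfl fun j _ => (abs_of_nonneg (hVpos p j)).symm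
  have hSgt : C * N ^ p < ∑ j, V p j := by
    rw [hS]; exact (lt_div_iff₀ hNp).mp hp
  have key := iter_rec B hB u (fun i => (hu i).le) N hN.le V hrec k p i
  have hlow : δ * ∑ j, V p j ≤ (B ^ k).mulVec (V p) i := by
    rw [Finset.mul_sum]
    exact Finset.sum_le_sum fun j _ => mul_le_mul_of_nonneg_right (hδle i j) (hVpos p j)
  have hδC : δ * C = N ^ k * M + δ := by
    rw [hCdef]; field_simp
  have t1 : δ * (C * N ^ p) < δ * ∑ j, V p j := mul_lt_mul_of_pos_left hSgt hδpos
  have t2 : N ^ (p + k) * (v i + wAux B u k i) ≤ N ^ (p + k) * M :=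
    mul_le_mul_of_nonneg_left (hMle i) (pow_pos hN0 _).le
  have t3 : δ * (C * N ^ p) = N ^ (p + k) * M + δ * N ^ p := by
    rw [show δ * (C * N ^ p) = (δ * C) * N ^ p by ring, hδC, pow_add]; ring
  have t4 : N ^ (p + k) * (v i + wAux B u k i)
      = N ^ (p + k) * v i + N ^ (p + k) * wAux B u k i := by ring
  have t5 : 0 < δ * N ^ p := mul_pos hδpos hNp
  linarith
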